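/- Let N ≥ 1, m > 0, and let F : ℝ^N → ℝ^N be m-strongly monotone, i.e., (x−y)ᵀ(F(x)−F(y)) ≥ m‖x−y‖² for all x, y ∈ ℝ^N. For each i ∈ {1,…,N} let p_i ≥ 0 and let g_{i1}, …, g_{i m_i} : ℝ → ℝ be convex and differentiable, and define s_{ij}(t) = g_{ij}'(t) if g_{ij}(t) > 0 and s_{ij}(t) = 0 otherwise. Then the map F̂ : ℝ^N → ℝ^N with components F̂_i(x) = F_i(x) + p_i Σ_{j=1}^{m_i} s_{ij}(x_i) is also m-strongly monotone. -/
import Mathlib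


open scoped RealInnerProductSpace

lemma sel_monotone {f : ℝ → ℝ} (hconv : ConvexOn ℝ Set.univ f)
    (hdiff : Differentiable ℝ f) :
    Monotone (fun t => if 0 < f t then deriv f t else 0) := by
  intro a b hab
  rcases eq_or_lt_of_le hab with rfl | hlt
  · exact le_rfl
  dsimp only
  by_cases ha : 0 < f a <;> by_cases hb : 0 < f b <;> simp [ha, hb]
  · exact hconv.monotoneOn_deriv (fun x _ => hdiff x) trivial trivial hab
  · -- f a > 0, f b ≤ 0 : deriv f a ≤ slope ≤ 0
    have h1 : deriv f a ≤ slope f a b :=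
      hconv.deriv_le_slope trivial trivial hlt (hdiff a)
    have h2 : slope f a b ≤ 0 := by
      rw [slope_def_field]
      apply div_nonpos_of_nonpos_of_nonneg
      · linarith [not_lt.mp hb]
      · linarith
    linarith
  · -- f a ≤ 0 < f b : 0 ≤ slope ≤ deriv f b
    have h1 : slope f a b ≤ deriv f b :=
      hconv.slope_le_deriv trivial trivial hlt (hdiff b)
    have h2 : 0 ≤ slope f a b := by
      rw [slope_def_field]
      apply div_nonneg
      · linarith [not_lt.mp ha]
      · linarith
    linarith

/-- Adding the exact-penalty terms preserves `m`-strong monotonicity of the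
pseudo-gradient. -/
theorem penalized_pseudogradient_strongly_monotone {N : ℕ} (hN : 1 ≤ N)
    (m : ℝ) (hm : 0 < m)
    (F : EuclideanSpace ℝ (Fin N) → EuclideanSpace ℝ (Fin N))
    (hF : ∀ x y : EuclideanSpace ℝ (Fin N), m * ‖x - y‖ ^ 2 ≤ ⟪x - y, F x - F y⟫)
    (mi : Fin N → ℕ) (p : Fin N → ℝ) (hp : ∀ i, 0 ≤ p i)
    (g : (i : Fin N) → Fin (mi i) → ℝ → ℝ)
    (hgconv : ∀ i j, ConvexOn ℝ Set.univ (g i j))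
    (hgdiff : ∀ i j, Differentiable ℝ (g i j))
    (s : (i : Fin N) → Fin (mi i) → ℝ → ℝ)
    (hs : ∀ i j t, s i j t = if 0 < g i j t then deriv (g i j) t else 0)
    (Fhat : EuclideanSpace ℝ (Fin N) → EuclideanSpace ℝ (Fin N))
    (hFhat : ∀ (x : EuclideanSpace ℝ (Fin N)) (i : Fin N),
      Fhat x i = F x i + p i * ∑ j, s i j (x i)) :
    ∀ x y : EuclideanSpace ℝ (Fin N), m * ‖x - y‖ ^ 2 ≤ ⟪x - y, Fhat x - Fhat y⟫ := by
  intro x y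
  have key : ⟪x - y, F x - F y⟫ ≤ ⟪x - y, Fhat x - Fhat y⟫ := by
    rw [PiLp.inner_apply, PiLp.inner_apply]
    apply Finset.sum_le_sum
    intro i _
    simp only [PiLp.sub_apply, hFhat, RCLike.inner_apply, conj_trivial]
    have hterm : 0 ≤ (x i - y i) * (p i * ∑ j, s i j (x i) - p i * ∑ j, s i j (y i)) := by
      rw [← mul_sub, ← Finset.sum_sub_distrib]
      rcases le_total (y i) (x i) with h | h
      · apply mul_nonneg (by linarith)
        apply mul_nonneg (hp i)
        apply Finset.sum_nonneg
        intro j _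
        have := sel_monotone (hgconv i j) (hgdiff i j) h
        simp only [← hs] at this
        linarith
      · have hS : (∑ j, (s i j (x i) - s i j (y i))) ≤ 0 := by
          apply Finset.sum_nonpos
          intro j _
          have := sel_monotone (hgconv i j) (hgdiff i j) h
          simp only [← hs] at this
          linarith
        have h2 := mul_nonneg (sub_nonneg.mpr h) (mul_nonneg (hp i) (neg_nonneg.mpr hS))
        nlinarith [h2]
    nlinarith [hterm]
  linarith [hF x y]
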